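/- Let u(r) = (1 − 2m₀ r^{2-n})^{-1/2} on (r₁,∞) and suppose V(r) solves the ODE V'' − u^{-1} u' V' = ((n-1)(n-2)/(2r²))(1 − u²) V with V = 1 + o(1) and V' = o(1/r) as r → ∞. Then V(r) = √(1 − 2m₀ r^{2-n}). -/

import Mathlib

open Filter Set Real

private noncomputable def Af (m₀ : ℝ) (n : ℕ) (r : ℝ) : ℝ :=
  1 - 2 * m₀ * r ^ ((2 : ℝ) - n)

private noncomputable def A1f (m₀ : ℝ) (n : ℕ) (r : ℝ) : ℝ :=
  (-(2 * m₀) * ((2 : ℝ) - n)) * r ^ ((2 : ℝ) - n - 1)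

private noncomputable def A2f (m₀ : ℝ) (n : ℕ) (r : ℝ) : ℝ :=
  (-(2 * m₀) * ((2 : ℝ) - n) * ((2 : ℝ) - n - 1)) * r ^ ((2 : ℝ) - n - 1 - 1)

private noncomputable def Bf (m₀ : ℝ) (n : ℕ) (r : ℝ) : ℝ :=
  Af m₀ n r ^ ((1 : ℝ)/2)

private noncomputable def B1f (m₀ : ℝ) (n : ℕ) (r : ℝ) : ℝ :=
  A1f m₀ n r * ((1 : ℝ)/2) * Af m₀ n r ^ ((1 : ℝ)/2 - 1)

private noncomputable def B2f (m₀ : ℝ) (n : ℕ) (r : ℝ) : ℝ :=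
  A2f m₀ n r * ((1 : ℝ)/2) * Af m₀ n r ^ ((1 : ℝ)/2 - 1)
    + A1f m₀ n r * ((1 : ℝ)/2)
      * (A1f m₀ n r * ((1 : ℝ)/2 - 1) * Af m₀ n r ^ ((1 : ℝ)/2 - 1 - 1))

private noncomputable def U1f (m₀ : ℝ) (n : ℕ) (r : ℝ) : ℝ :=
  A1f m₀ n r * (-(1/2) : ℝ) * Af m₀ n r ^ ((-(1/2) : ℝ) - 1)

private lemma hAf_d (m₀ : ℝ) (n : ℕ) {r : ℝ} (hr : 0 < r) :
    HasDerivAt (fun r => Af m₀ n r) (A1f m₀ n r) r := by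
  have h := ((Real.hasDerivAt_rpow_const (x := r) (p := (2:ℝ) - n)
    (Or.inl hr.ne')).const_mul (2 * m₀))
  have h2 := (hasDerivAt_const r (1:ℝ)).sub h
  simp only [Af, A1f]
  refine HasDerivAt.congr_deriv h2 (Eq.symm ?_)
  ring

private lemma hA1f_d (m₀ : ℝ) (n : ℕ) {r : ℝ} (hr : 0 < r) :
    HasDerivAt (fun r => A1f m₀ n r) (A2f m₀ n r) r := by
  have h := ((Real.hasDerivAt_rpow_const (x := r) (p := (2:ℝ) - n - 1)
    (Or.inl hr.ne')).const_mul (-(2 * m₀) * ((2:ℝ) - n)))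
  simp only [A1f, A2f]
  refine HasDerivAt.congr_deriv h (Eq.symm ?_)
  ring

private lemma hBf_d (m₀ : ℝ) (n : ℕ) {r : ℝ} (hr : 0 < r) (ha : 0 < Af m₀ n r) :
    HasDerivAt (fun r => Bf m₀ n r) (B1f m₀ n r) r :=
  (hAf_d m₀ n hr).rpow_const (Or.inl ha.ne')

private lemma hB1f_d (m₀ : ℝ) (n : ℕ) {r : ℝ} (hr : 0 < r) (ha : 0 < Af m₀ n r) :
    HasDerivAt (fun r => B1f m₀ n r) (B2f m₀ n r) r := by
  have h := ((hA1f_d m₀ n hr).mul_const ((1:ℝ)/2)).mul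
    ((hAf_d m₀ n hr).rpow_const (p := (1:ℝ)/2 - 1) (Or.inl ha.ne'))
  simp only [B1f, B2f]
  exact h

private lemma sq_Bf (m₀ : ℝ) (n : ℕ) {r : ℝ} (ha : 0 ≤ Af m₀ n r) :
    Bf m₀ n r ^ 2 = Af m₀ n r := by
  rw [Bf, ← Real.rpow_natCast (Af m₀ n r ^ ((1:ℝ)/2)) 2, ← Real.rpow_mul ha]
  norm_num

private lemma odeBf (m₀ : ℝ) (n : ℕ) {r : ℝ} (hr : 0 < r) (ha : 0 < Af m₀ n r) :
    B2f m₀ n r - Bf m₀ n r * U1f m₀ n r * B1f m₀ n r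
      = (((n:ℝ) - 1) * ((n:ℝ) - 2) / (2 * r ^ 2)) * (1 - (Af m₀ n r)⁻¹) * Bf m₀ n r := by
  have hbpos : 0 < Bf m₀ n r := Real.rpow_pos_of_pos ha _
  have hs2 := sq_Bf m₀ n ha.le
  have hP1 : Af m₀ n r ^ ((1:ℝ)/2 - 1) = Bf m₀ n r / Af m₀ n r := by
    rw [Real.rpow_sub ha, Real.rpow_one]; rfl
  have hP2 : Af m₀ n r ^ ((1:ℝ)/2 - 1 - 1) = Bf m₀ n r / Af m₀ n r / Af m₀ n r := by
    rw [Real.rpow_sub ha, Real.rpow_sub ha, Real.rpow_one]; rfl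
  have hP3 : Af m₀ n r ^ ((-(1/2) : ℝ) - 1) = Bf m₀ n r / Af m₀ n r / Af m₀ n r := by
    rw [show ((-(1/2) : ℝ) - 1) = (1:ℝ)/2 - 1 - 1 by norm_num]; exact hP2
  have hkey : (((n:ℝ) - 1) * ((n:ℝ) - 2) / (2 * r ^ 2)) * (Af m₀ n r - 1)
      = (1/2) * A2f m₀ n r := by
    have hre : r ^ ((2:ℝ) - n - 1 - 1) = r ^ ((2:ℝ) - n) / r ^ 2 := by
      rw [← Real.rpow_natCast r 2, ← Real.rpow_sub hr]
      congr 1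
      push_cast
      ring
    have hr2 : (r:ℝ) ^ 2 ≠ 0 := by positivity
    simp only [Af, A2f, hre]
    field_simp
    ring
  rw [B2f, B1f, U1f, hP1, hP2, hP3]
  rw [← hs2] at hkey ⊢
  have h2 : (((n:ℝ) - 1) * ((n:ℝ) - 2) / (2 * r ^ 2)) * (1 - (Bf m₀ n r ^ 2)⁻¹) * Bf m₀ n r
      = 1/2 * A2f m₀ n r / Bf m₀ n r := by
    rw [← hkey]
    field_simp
  rw [h2]
  field_simp
  ring

private lemma const_of_deriv_zero_of_tendsto {f : ℝ → ℝ} {a c : ℝ}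
    (hf : ∀ x, a < x → HasDerivAt f 0 x)
    (hl : Filter.Tendsto f Filter.atTop (nhds c)) :
    ∀ x, a < x → f x = c := by
  intro x hx
  have key : ∀ y, x ≤ y → f y = f x := by
    intro y hy
    exact constant_of_has_deriv_right_zero
      (fun z hz => ((hf z (lt_of_lt_of_le hx hz.1)).continuousAt).continuousWithinAt)
      (fun z hz => (hf z (lt_of_lt_of_le hx hz.1)).hasDerivWithinAt)
      y (Set.right_mem_Icc.mpr hy)
  have h2 : Filter.Tendsto f Filter.atTop (nhds (f x)) := by
    have he : f =ᶠ[Filter.atTop] fun _ => f x := by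
      filter_upwards [Filter.eventually_ge_atTop x] with y hy using key y hy
    exact Filter.Tendsto.congr' he.symm tendsto_const_nhds
  exact tendsto_nhds_unique h2 hl

/-- With `u(r) = (1 − 2m₀ r^{2−n})^{−1/2}`, any solution `V` of the ODE
`V'' − u⁻¹ u' V' = ((n−1)(n−2)/(2r²))(1 − u²) V` with `V = 1 + o(1)` and `V' = o(1/r)`
as `r → ∞` equals `√(1 − 2m₀ r^{2−n})`. -/
theorem static_potential_ODE_uniqueness
    (n : ℕ) (hn : 3 ≤ n) (m₀ r₁ : ℝ) (hr₁ : 0 < r₁)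
    (hdef : ∀ r : ℝ, r₁ < r → 0 < 1 - 2 * m₀ * r ^ ((2 : ℝ) - n))
    (u : ℝ → ℝ) (hu : ∀ r : ℝ, u r = (1 - 2 * m₀ * r ^ ((2 : ℝ) - n)) ^ (-(1/2) : ℝ))
    (V V' V'' : ℝ → ℝ)
    (hV' : ∀ r : ℝ, r₁ < r → HasDerivAt V (V' r) r)
    (hV'' : ∀ r : ℝ, r₁ < r → HasDerivAt V' (V'' r) r)
    (hode : ∀ r : ℝ, r₁ < r →
      V'' r - (u r)⁻¹ * deriv u r * V' r
        = (((n : ℝ) - 1) * ((n : ℝ) - 2) / (2 * r ^ 2)) * (1 - (u r) ^ 2) * V r)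
    (hlim : Filter.Tendsto V Filter.atTop (nhds 1))
    (hlim' : V' =o[Filter.atTop] fun r : ℝ => 1 / r) :
    ∀ r : ℝ, r₁ < r → V r = Real.sqrt (1 - 2 * m₀ * r ^ ((2 : ℝ) - n)) := by
  have hnR : (3:ℝ) ≤ (n:ℝ) := by exact_mod_cast hn
  have hrpos : ∀ r : ℝ, r₁ < r → 0 < r := fun r hr => hr₁.trans hr
  have hApos : ∀ r : ℝ, r₁ < r → 0 < Af m₀ n r := fun r hr => hdef r hr
  have hBpos : ∀ r : ℝ, r₁ < r → 0 < Bf m₀ n r :=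
    fun r hr => Real.rpow_pos_of_pos (hApos r hr) _
  -- basic facts about u
  have hu_inv : ∀ r : ℝ, r₁ < r → (u r)⁻¹ = Bf m₀ n r := by
    intro r hr
    rw [show u r = Af m₀ n r ^ (-(1/2) : ℝ) from hu r,
      Real.rpow_neg (hApos r hr).le, inv_inv]
    rfl
  have hu_r : ∀ r : ℝ, r₁ < r → u r = (Bf m₀ n r)⁻¹ := by
    intro r hr
    rw [show u r = Af m₀ n r ^ (-(1/2) : ℝ) from hu r, Real.rpow_neg (hApos r hr).le]
    rfl
  have hu_sq : ∀ r : ℝ, r₁ < r → (u r) ^ 2 = (Af m₀ n r)⁻¹ := by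
    intro r hr
    rw [show u r = Af m₀ n r ^ (-(1/2) : ℝ) from hu r,
      ← Real.rpow_natCast (Af m₀ n r ^ (-(1/2) : ℝ)) 2, ← Real.rpow_mul (hApos r hr).le]
    norm_num [Real.rpow_neg_one]
  have hu_d : ∀ r : ℝ, r₁ < r → HasDerivAt u (U1f m₀ n r) r := by
    intro r hr
    have hufun : u = fun r => Af m₀ n r ^ (-(1/2) : ℝ) := funext fun r => hu r
    rw [hufun]
    exact (hAf_d m₀ n (hrpos r hr)).rpow_const (Or.inl (hApos r hr).ne')
  have hu_deriv : ∀ r : ℝ, r₁ < r → deriv u r = U1f m₀ n r :=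
    fun r hr => (hu_d r hr).deriv
  -- limits at infinity
  have h20 : Tendsto (fun r : ℝ => r ^ ((2:ℝ) - n)) atTop (nhds 0) := by
    have h : (0:ℝ) < (n:ℝ) - 2 := by linarith
    simpa [neg_sub] using tendsto_rpow_neg_atTop h
  have h21 : Tendsto (fun r : ℝ => r ^ ((2:ℝ) - n - 1)) atTop (nhds 0) := by
    have h : (0:ℝ) < (n:ℝ) - 2 + 1 := by linarith
    have h3 : -((n:ℝ) - 2 + 1) = (2:ℝ) - n - 1 := by ring
    simpa [h3] using tendsto_rpow_neg_atTop h
  have hAlim : Tendsto (fun r => Af m₀ n r) atTop (nhds 1) := by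
    have h2 := (tendsto_const_nhds (α := ℝ) (x := (1:ℝ)) (f := atTop)).sub
      (h20.const_mul (2 * m₀))
    simpa [Af] using h2
  have hBlim : Tendsto (fun r => Bf m₀ n r) atTop (nhds 1) := by
    simpa [Bf, Real.one_rpow] using hAlim.rpow_const (Or.inl one_ne_zero)
  have hA1lim : Tendsto (fun r => A1f m₀ n r) atTop (nhds 0) := by
    simpa [A1f] using h21.const_mul (-(2 * m₀) * ((2:ℝ) - n))
  have hApowlim : Tendsto (fun r => Af m₀ n r ^ ((1:ℝ)/2 - 1)) atTop (nhds 1) := by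
    simpa [Real.one_rpow] using hAlim.rpow_const (Or.inl one_ne_zero)
  have hB1lim : Tendsto (fun r => B1f m₀ n r) atTop (nhds 0) := by
    simpa [B1f] using (hA1lim.mul_const ((1:ℝ)/2)).mul hApowlim
  have hV'0 : Tendsto V' atTop (nhds 0) :=
    hlim'.isBigO.trans_tendsto (by simpa [one_div] using tendsto_inv_atTop_zero)
  have hF0 : Tendsto (fun r => Bf m₀ n r * (V r * B1f m₀ n r - V' r * Bf m₀ n r))
      atTop (nhds 0) := by
    simpa using hBlim.mul ((hlim.mul hB1lim).sub (hV'0.mul hBlim))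
  -- the combination u⁻¹ u' B = -B'
  have hc : ∀ r, r₁ < r → (u r)⁻¹ * deriv u r * Bf m₀ n r = - B1f m₀ n r := by
    intro r hr
    have ha := hApos r hr
    have hb := (hBpos r hr).ne'
    have hs2 := sq_Bf m₀ n ha.le
    have hP3 : Af m₀ n r ^ ((-(1/2) : ℝ) - 1) = Bf m₀ n r / Af m₀ n r / Af m₀ n r := by
      rw [show ((-(1/2) : ℝ) - 1) = (1:ℝ)/2 - 1 - 1 by norm_num,
        Real.rpow_sub ha, Real.rpow_sub ha, Real.rpow_one]; rfl
    have hP1 : Af m₀ n r ^ ((1:ℝ)/2 - 1) = Bf m₀ n r / Af m₀ n r := by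
      rw [Real.rpow_sub ha, Real.rpow_one]; rfl
    rw [hu_inv r hr, hu_deriv r hr, U1f, B1f, hP3, hP1, ← hs2]
    field_simp
  -- the Wronskian-type quantity has zero derivative
  have hF_d : ∀ r, r₁ < r →
      HasDerivAt (fun r => Bf m₀ n r * (V r * B1f m₀ n r - V' r * Bf m₀ n r)) 0 r := by
    intro r hr
    have hr0 := hrpos r hr
    have ha := hApos r hr
    have h := (hBf_d m₀ n hr0 ha).mul
      (((hV' r hr).mul (hB1f_d m₀ n hr0 ha)).sub ((hV'' r hr).mul (hBf_d m₀ n hr0 ha)))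
    refine HasDerivAt.congr_deriv h (Eq.symm ?_)
    simp only [Pi.mul_apply, Pi.sub_apply]
    have h1 := hode r hr
    have h2 : B2f m₀ n r - (u r)⁻¹ * deriv u r * B1f m₀ n r
        = (((n:ℝ) - 1) * ((n:ℝ) - 2) / (2 * r ^ 2)) * (1 - (u r) ^ 2) * Bf m₀ n r := by
      rw [hu_deriv r hr, hu_inv r hr, hu_sq r hr]
      exact odeBf m₀ n hr0 ha
    have h3 := hc r hr
    linear_combination (Bf m₀ n r * Bf m₀ n r) * h1 - (Bf m₀ n r * V r) * h2
      - (V r * B1f m₀ n r - V' r * Bf m₀ n r) * h3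
  have hFzero := const_of_deriv_zero_of_tendsto hF_d hF0
  have hW0 : ∀ r, r₁ < r → V r * B1f m₀ n r = V' r * Bf m₀ n r := by
    intro r hr
    rcases mul_eq_zero.1 (hFzero r hr) with h | h
    · exact absurd h (hBpos r hr).ne'
    · exact sub_eq_zero.1 h
  -- V·u is constant
  have hG_d : ∀ r, r₁ < r → HasDerivAt (fun r => V r * u r) 0 r := by
    intro r hr
    have h := (hV' r hr).mul (hu_d r hr)
    refine HasDerivAt.congr_deriv h (Eq.symm ?_)
    have ha := hApos r hr
    have hb := (hBpos r hr).ne'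
    have hs2 := sq_Bf m₀ n ha.le
    have hP3 : Af m₀ n r ^ ((-(1/2) : ℝ) - 1) = Bf m₀ n r / Af m₀ n r / Af m₀ n r := by
      rw [show ((-(1/2) : ℝ) - 1) = (1:ℝ)/2 - 1 - 1 by norm_num,
        Real.rpow_sub ha, Real.rpow_sub ha, Real.rpow_one]; rfl
    have hP1 : Af m₀ n r ^ ((1:ℝ)/2 - 1) = Bf m₀ n r / Af m₀ n r := by
      rw [Real.rpow_sub ha, Real.rpow_one]; rfl
    have hw := hW0 r hr
    rw [B1f, hP1, ← hs2] at hw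
    rw [hu_r r hr, U1f, hP3, ← hs2]
    field_simp [hb] at hw ⊢
    linear_combination hw
  have hulim : Tendsto u atTop (nhds 1) := by
    have hufun : u = fun r => Af m₀ n r ^ (-(1/2) : ℝ) := funext fun r => hu r
    rw [hufun]
    simpa [Real.one_rpow] using hAlim.rpow_const (Or.inl one_ne_zero)
  have hGlim : Tendsto (fun r => V r * u r) atTop (nhds 1) := by
    simpa using hlim.mul hulim
  have hGone := const_of_deriv_zero_of_tendsto hG_d hGlim
  intro r hr
  have h := hGone r hr
  rw [hu_r r hr, mul_inv_eq_one₀ (hBpos r hr).ne'] at h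
  rw [Real.sqrt_eq_rpow]
  exact h
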